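/- The constant f_1 = \sum_{k=1}^\infty (p_k - 1)/(p_1 p_2 \cdots p_{k-1}) satisfies 2.920050977316 < f_1 < 2.920050977317. -/
import Mathlib


open scoped BigOperators

/-- `p k` is the `(k+1)`-st prime, i.e. the paper's `p_{k+1}` (so `p 0 = 2`). -/
noncomputable def p (k : ℕ) : ℕ := Nat.nth Nat.Prime k

/-- The `k`-th summand `(p_{k+1} - 1) / (p_1 ⋯ p_k)` of the series (0-indexed). -/
noncomputable def primeTerm (k : ℕ) : ℝ :=
  ((p k : ℝ) - 1) / ∏ i ∈ Finset.range k, (p i : ℝ)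

lemma pval (q k : ℕ) (hq : q.Prime) (hc : Nat.count Nat.Prime q = k) : p k = q := by
  have := Nat.nth_count (p := Nat.Prime) (n := q) hq
  rw [hc] at this; exact this

lemma p_prime (k : ℕ) : (p k).Prime := Nat.prime_nth_prime k

lemma p_succ_le (k : ℕ) : p (k + 1) ≤ 2 * p k := by
  have hpk : (p k).Prime := p_prime k
  obtain ⟨q, hq, h1, h2⟩ := Nat.bertrand (p k) hpk.pos.ne'
  have hcount : k + 1 < Nat.count Nat.Prime (q + 1) := by
    have e1 : Nat.count Nat.Prime (p k + 1) = k + 1 :=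
      Nat.count_nth_succ_of_infinite Nat.infinite_setOf_prime k
    have e2 : Nat.count Nat.Prime (q + 1) = Nat.count Nat.Prime q + 1 := by
      rw [Nat.count_succ, if_pos hq]
    have := Nat.count_monotone Nat.Prime (show p k + 1 ≤ q from h1)
    omega
  have := Nat.nth_lt_of_lt_count hcount
  show Nat.nth Nat.Prime (k+1) ≤ 2 * p k
  omega

lemma prod_pos (k : ℕ) : 0 < ∏ i ∈ Finset.range k, (p i : ℝ) := by
  apply Finset.prod_pos
  intro i _
  exact_mod_cast (p_prime i).pos

lemma primeTerm_pos (k : ℕ) : 0 < primeTerm k := by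
  apply div_pos _ (prod_pos k)
  have : 2 ≤ (p k : ℝ) := by exact_mod_cast (p_prime k).two_le
  linarith

lemma ratio (k : ℕ) (hk : 2 ≤ k) : primeTerm (k + 1) ≤ (1/2) * primeTerm k := by
  have h5 : (5 : ℕ) ≤ p k := by
    have : p 2 ≤ p k := Nat.nth_monotone Nat.infinite_setOf_prime hk
    rwa [pval 5 2 (by norm_num) (by decide)] at this
  have h5' : (5 : ℝ) ≤ (p k : ℝ) := by exact_mod_cast h5
  have hle : ((p (k+1) : ℝ)) ≤ 2 * p k := by exact_mod_cast p_succ_le k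
  have hP := prod_pos k
  have hpk : (0:ℝ) < p k := by linarith
  rw [primeTerm, primeTerm, Finset.prod_range_succ]
  rw [div_le_iff₀ (by positivity), mul_comm ((1:ℝ)/2), mul_assoc, div_mul_eq_mul_div,
    le_div_iff₀ hP]
  nlinarith [mul_pos hP hpk]

lemma decay (k : ℕ) : primeTerm (k + 15) ≤ primeTerm 15 * (1/2)^k := by
  induction k with
  | zero => simp
  | succ n ih =>
    have h := ratio (n + 15) (by omega)
    calc primeTerm (n + 1 + 15) = primeTerm ((n + 15) + 1) := by ring_nf
      _ ≤ (1/2) * primeTerm (n + 15) := h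
      _ ≤ (1/2) * (primeTerm 15 * (1/2)^n) := by linarith [primeTerm_pos (n+15)]
      _ = primeTerm 15 * (1/2)^(n+1) := by ring

lemma geo_summable : Summable (fun k : ℕ => primeTerm 15 * (1/2)^k) :=
  (summable_geometric_of_lt_one (by norm_num) (by norm_num)).mul_left _

lemma tail_summable : Summable (fun k : ℕ => primeTerm (k + 15)) :=
  Summable.of_nonneg_of_le (fun k => (primeTerm_pos _).le) decay geo_summable

lemma hsum : Summable primeTerm := (summable_nat_add_iff 15).mp tail_summable

/-- The prime-generating constant satisfies
`2.920050977316 < f_1 < 2.920050977317`. -/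
theorem statement16 :
    (2.920050977316 : ℝ) < (∑' k, primeTerm k) ∧
      (∑' k, primeTerm k) < (2.920050977317 : ℝ) := by
  have hsplit := (Summable.sum_add_tsum_nat_add 15 hsum).symm
  have h0 : p 0 = 2 := pval 2 0 (by norm_num) (by decide)
  have h1 : p 1 = 3 := pval 3 1 (by norm_num) (by decide)
  have h2 : p 2 = 5 := pval 5 2 (by norm_num) (by decide)
  have h3 : p 3 = 7 := pval 7 3 (by norm_num) (by decide)
  have h4 : p 4 = 11 := pval 11 4 (by norm_num) (by decide)
  have h5 : p 5 = 13 := pval 13 5 (by norm_num) (by decide)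
  have h6 : p 6 = 17 := pval 17 6 (by norm_num) (by decide)
  have h7 : p 7 = 19 := pval 19 7 (by norm_num) (by decide)
  have h8 : p 8 = 23 := pval 23 8 (by norm_num) (by decide)
  have h9 : p 9 = 29 := pval 29 9 (by norm_num) (by decide)
  have h10 : p 10 = 31 := pval 31 10 (by norm_num) (by decide)
  have h11 : p 11 = 37 := pval 37 11 (by norm_num) (by decide)
  have h12 : p 12 = 41 := pval 41 12 (by norm_num) (by decide)
  have h13 : p 13 = 43 := pval 43 13 (by norm_num) (by decide)
  have h14 : p 14 = 47 := pval 47 14 (by norm_num) (by decide)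
  have h15 : p 15 = 53 := pval 53 15 (by norm_num) (by decide)
  have hpartial : ∑ k ∈ Finset.range 15, primeTerm k =
      (516247702872119 : ℝ) / 176794072049595 := by
    simp only [primeTerm, Finset.prod_range_succ, Finset.prod_range_zero,
      Finset.sum_range_succ, Finset.sum_range_zero,
      h0, h1, h2, h3, h4, h5, h6, h7, h8, h9, h10, h11, h12, h13, h14]
    norm_num
  have hterm15 : primeTerm 15 = 52 / 614889782588491410 := by
    simp only [primeTerm, Finset.prod_range_succ, Finset.prod_range_zero,
      h0, h1, h2, h3, h4, h5, h6, h7, h8, h9, h10, h11, h12, h13, h14, h15]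
    norm_num
  have htail_nonneg : 0 ≤ ∑' k, primeTerm (k + 15) :=
    tsum_nonneg fun k => (primeTerm_pos _).le
  have htail_le : ∑' k, primeTerm (k + 15) ≤ 2 * primeTerm 15 := by
    have := Summable.tsum_le_tsum decay tail_summable geo_summable
    rw [tsum_mul_left, tsum_geometric_of_lt_one (by norm_num) (by norm_num)] at this
    calc ∑' k, primeTerm (k + 15) ≤ primeTerm 15 * (1 - 1/2)⁻¹ := this
      _ = 2 * primeTerm 15 := by ring
  rw [hsplit, hpartial]
  rw [hterm15] at htail_le
  constructor <;> norm_num <;> linarith
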